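/- Let G be a non-compact locally compact Hausdorff group with a left Haar measure μ and modular function Δ. Then for every compact symmetric neighborhood V of the identity element e of G, there exists a sequence (k_n)_{n∈ℕ} in G such that Δ(k_n) ≤ 1 for every n and, for all ℓ ≠ n, the sets V·k_ℓ⁻¹ and V·k_n⁻¹ are disjoint and the sets k_ℓ·V·V and k_n·V·V are disjoint. -/

import Mathlib

open MeasureTheory ENNReal Filter Set Topology Pointwise

theorem exists_seq_disjoint_translates
    {G : Type*} [Group G] [TopologicalSpace G] [IsTopologicalGroup G]
    [T2Space G] [LocallyCompactSpace G] [MeasurableSpace G] [BorelSpace G]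
    (μ : Measure G) [μ.IsHaarMeasure]
    (hnoncompact : ¬ CompactSpace G)
    -- `Δ` is the modular function of `G`: `μ(E·a) = Δ(a)·μ(E)` for measurable `E` and `a ∈ G`.
    (Δ : G → ℝ) (hΔpos : ∀ a : G, 0 < Δ a)
    (hΔ : ∀ (a : G) (E : Set G), MeasurableSet E →
      μ (E * ({a} : Set G)) = ENNReal.ofReal (Δ a) * μ E)
    -- `V` is a compact symmetric neighborhood of the identity element.
    (V : Set G) (hV : IsCompact V) (hVsymm : V⁻¹ = V) (hVnhds : V ∈ 𝓝 (1 : G)) :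
    ∃ k : ℕ → G, (∀ n : ℕ, Δ (k n) ≤ 1) ∧
      ∀ ℓ n : ℕ, ℓ ≠ n →
        Disjoint (V * ({(k ℓ)⁻¹} : Set G)) (V * ({(k n)⁻¹} : Set G)) ∧
        Disjoint (({k ℓ} : Set G) * V * V) (({k n} : Set G) * V * V) := by
  classical
  haveI : NoncompactSpace G := not_compactSpace_iff.mp hnoncompact
  set W : Set G := V * V * V * V with hW
  have h1V : (1 : G) ∈ V := mem_of_mem_nhds hVnhds
  have hWsymm : W⁻¹ = W := by
    rw [hW, mul_inv_rev, mul_inv_rev, mul_inv_rev, hVsymm]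
    simp [mul_assoc]
  have hWcompact : IsCompact W := ((hV.mul hV).mul hV).mul hV
  have hVVW : V * V ⊆ W := by
    intro a ha
    have : a = a * 1 * 1 := by group
    rw [this]
    exact Set.mul_mem_mul (Set.mul_mem_mul ha h1V) h1V
  -- inverse of modular function
  have hμVpos : 0 < μ V := by
    obtain ⟨U, hUV, hUo, hU1⟩ := mem_nhds_iff.mp hVnhds
    exact lt_of_lt_of_le (hUo.measure_pos μ ⟨1, hU1⟩) (measure_mono hUV)
  have hμVne : μ V ≠ ⊤ := hV.measure_lt_top.ne
  have hΔinv : ∀ g : G, Δ g⁻¹ * Δ g = 1 := by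
    intro g
    have hVg : MeasurableSet (V * ({g} : Set G)) :=
      (hV.mul isCompact_singleton).measurableSet
    have h1 := hΔ g V hV.measurableSet
    have h2 := hΔ g⁻¹ (V * {g}) hVg
    have h3 : V * ({g} : Set G) * ({g⁻¹} : Set G) = V := by
      rw [mul_assoc, Set.singleton_mul_singleton, mul_inv_cancel, Set.singleton_one, mul_one]
    rw [h3, h1] at h2
    have key : ENNReal.ofReal (Δ g⁻¹) * ENNReal.ofReal (Δ g) = 1 :=
      (ENNReal.mul_eq_right hμVpos.ne' hμVne).mp (by rw [mul_assoc]; exact h2.symm)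
    rw [← ENNReal.ofReal_mul (hΔpos g⁻¹).le] at key
    have := ENNReal.ofReal_eq_one.mp key
    linarith
  -- construct the sequence
  have main : ∃ f : ℕ → G, (∀ n, Δ (f n) ≤ 1) ∧
      ∀ m n, m < n → (f n)⁻¹ * f m ∉ W := by
    apply exists_seq_of_forall_finset_exists (fun x => Δ x ≤ 1)
      (fun x y => y⁻¹ * x ∉ W)
    intro s _
    set K : Set G := ⋃ x ∈ s, (({x} : Set G) * W ∪ W * ({x⁻¹} : Set G)) with hK
    have hKcomp : IsCompact K :=
      s.finite_toSet.isCompact_biUnion (fun x _ =>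
        (isCompact_singleton.mul hWcompact).union (hWcompact.mul isCompact_singleton))
    have hKne : K ≠ univ := hKcomp.ne_univ
    obtain ⟨g, hg⟩ : ∃ g, g ∉ K := by
      by_contra h
      push_neg at h
      exact hKne (eq_univ_of_forall h)
    have hstep : ∀ x ∈ s, g⁻¹ * x ∉ W ∧ g * x ∉ W := by
      intro x hx
      constructor
      · intro hw
        apply hg
        have hxg : x⁻¹ * g ∈ W := by rw [← hWsymm]; simpa using Set.inv_mem_inv.mpr hw
        exact Set.mem_biUnion hx (Or.inl ⟨x, rfl, x⁻¹ * g, hxg, by group⟩)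
      · intro hw
        apply hg
        exact Set.mem_biUnion hx (Or.inr ⟨g * x, hw, x⁻¹, rfl, by group⟩)
    by_cases hΔg : Δ g ≤ 1
    · exact ⟨g, hΔg, fun x hx => (hstep x hx).1⟩
    · refine ⟨g⁻¹, ?_, fun x hx => by simpa using (hstep x hx).2⟩
      have := hΔinv g
      nlinarith [hΔpos g, hΔpos g⁻¹]
  obtain ⟨f, hf1, hf2⟩ := main
  have hdisj : ∀ ℓ n : ℕ, ℓ < n →
      Disjoint (V * ({(f ℓ)⁻¹} : Set G)) (V * ({(f n)⁻¹} : Set G)) ∧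
      Disjoint (({f ℓ} : Set G) * V * V) (({f n} : Set G) * V * V) := by
    intro ℓ n hln
    have hr := hf2 ℓ n hln
    constructor
    · rw [Set.disjoint_left]
      rintro a ⟨v, hv, -, rfl : _ = (f ℓ)⁻¹, rfl⟩ ⟨w, hw, -, rfl : _ = (f n)⁻¹, heq⟩
      apply hr
      have hmem : w⁻¹ * v ∈ V * V := by
        apply Set.mul_mem_mul _ hv
        rw [← hVsymm]; exact Set.inv_mem_inv.mpr hw
      have heq' : w * (f n)⁻¹ = v * (f ℓ)⁻¹ := heq
      have h5 : (f n)⁻¹ * f ℓ = w⁻¹ * v := by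
        have := congrArg (fun z => w⁻¹ * z * f ℓ) heq'
        simpa [mul_assoc] using this
      rw [h5]
      exact hVVW hmem
    · rw [Set.disjoint_left]
      rintro x ⟨-, ⟨-, rfl : _ = f ℓ, a, ha, rfl⟩, b, hb, rfl⟩
        ⟨-, ⟨-, rfl : _ = f n, c, hc, rfl⟩, d, hd, heq⟩
      apply hr
      have heq' : f n * c * d = f ℓ * a * b := heq
      have h5 : (f n)⁻¹ * f ℓ = c * d * b⁻¹ * a⁻¹ := by
        have := congrArg (fun z => (f n)⁻¹ * z * b⁻¹ * a⁻¹) heq'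
        simpa [mul_assoc] using this.symm
      rw [h5]
      refine Set.mul_mem_mul (Set.mul_mem_mul (Set.mul_mem_mul hc hd) ?_) ?_
      · rw [← hVsymm]; exact Set.inv_mem_inv.mpr hb
      · rw [← hVsymm]; exact Set.inv_mem_inv.mpr ha
  refine ⟨f, hf1, fun ℓ n hne => ?_⟩
  rcases hne.lt_or_gt with h | h
  · exact hdisj ℓ n h
  · exact ⟨(hdisj n ℓ h).1.symm, (hdisj n ℓ h).2.symm⟩
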